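/- Let n ≥ m ≥ 1 and k ≥ 2 be integers such that n is even, m is odd, and k − 1 is divisible by (n+m+1)/2. Then r(S(n,m); k) ≥ kn + m + 2. -/

import Mathlib

open SimpleGraph

/-- The double star `S(n,m)`: two adjacent centers `0` and `1`, with `n` leaves
attached to `0` (vertices `2,…,n+1`) and `m` leaves attached to `1`
(vertices `n+2,…,n+m+1`). -/
def doubleStar (n m : ℕ) : SimpleGraph (Fin (n + m + 2)) :=
  SimpleGraph.fromRel (fun u v =>
    (u.val = 0 ∧ v.val = 1) ∨
    (u.val = 0 ∧ 2 ≤ v.val ∧ v.val ≤ n + 1) ∨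
    (u.val = 1 ∧ n + 2 ≤ v.val))

/-- The star `K_{1,n}` with center `0` and `n` leaves. -/
def starGraph (n : ℕ) : SimpleGraph (Fin (n + 1)) :=
  SimpleGraph.fromRel (fun u _ => u.val = 0)

/-- The subdivided star `S_n^m`, obtained from `K_{1,n}` by subdividing `m` edges each
exactly once: center `0`; subdivision vertices `1,…,m`; for `1 ≤ i ≤ m` the vertex `m+i`
is the leaf beyond subdivision vertex `i`; vertices `2m+1,…,n+m` are ordinary leaves. -/
def subdividedStar (n m : ℕ) : SimpleGraph (Fin (n + m + 1)) :=
  SimpleGraph.fromRel (fun u v =>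
    (u.val = 0 ∧ 1 ≤ v.val ∧ v.val ≤ m) ∨
    (1 ≤ u.val ∧ u.val ≤ m ∧ v.val = u.val + m) ∨
    (u.val = 0 ∧ 2 * m + 1 ≤ v.val))

/-- `K_N` colored by `c` with `k` colors contains a monochromatic copy of `H`. -/
def HasMonoCopy {W : Type} (H : SimpleGraph W) {N : ℕ} {α : Type}
    (c : Sym2 (Fin N) → α) : Prop :=
  ∃ (f : W ↪ Fin N) (i : α), ∀ v w : W, H.Adj v w → c s(f v, f w) = i

/-- Every `k`-coloring of the edges of `K_N` contains a monochromatic copy of `H`. -/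
def IsRamsey {W : Type} (H : SimpleGraph W) (k N : ℕ) : Prop :=
  ∀ c : Sym2 (Fin N) → Fin k, HasMonoCopy H c

/-- The `k`-color Ramsey number of `H`. -/
noncomputable def ramseyNumber {W : Type} (H : SimpleGraph W) (k : ℕ) : ℕ :=
  sInf {N | IsRamsey H k N}

/-- There is a list assignment of `k` colors to each edge of `K_N` such that every
coloring from the lists contains a monochromatic copy of `H`. -/
def IsListRamsey {W : Type} (H : SimpleGraph W) (k N : ℕ) : Prop :=
  ∃ L : Sym2 (Fin N) → Finset ℕ, (∀ e, (L e).card = k) ∧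
    ∀ c : Sym2 (Fin N) → ℕ, (∀ e, c e ∈ L e) → HasMonoCopy H c

/-- The `k`-color list Ramsey number of `H`. -/
noncomputable def listRamseyNumber {W : Type} (H : SimpleGraph W) (k : ℕ) : ℕ :=
  sInf {N | IsListRamsey H k N}



/- ### auxiliary lemmas ### -/

lemma minDegSub {α : Type} [DecidableEq α] (r : α → α → Prop) [DecidableRel r]
    (hsymm : ∀ x y, r x y → r y x) (hirr : ∀ x, ¬ r x x) (d : ℕ) :
    ∀ V : Finset α, 2 * d * V.card < ∑ x ∈ V, (V.filter (r x)).card →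
    ∃ U, U ⊆ V ∧ U.Nonempty ∧ ∀ x ∈ U, d + 1 ≤ (U.filter (r x)).card := by
  intro V
  induction V using Finset.strongInduction with
  | _ V ih =>
    intro hsum
    by_cases hall : ∀ x ∈ V, d + 1 ≤ (V.filter (r x)).card
    · refine ⟨V, Finset.Subset.refl V, ?_, hall⟩
      rcases V.eq_empty_or_nonempty with rfl | hne
      · simp at hsum
      · exact hne
    · push_neg at hall
      obtain ⟨x, hxV, hxd⟩ := hall
      have hD : (V.filter (r x)).card ≤ d := by omega
      set V' := V.erase x with hV'
      have hss : V' ⊂ V := Finset.erase_ssubset hxV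
      have e1 : ∀ y ∈ V', (V'.filter (r y)).card + (if r y x then 1 else 0)
          = (V.filter (r y)).card := by
        intro y hy
        have hfe : V'.filter (r y) = (V.filter (r y)).erase x := Finset.filter_erase _ _ _
        rw [hfe]
        by_cases hryx : r y x
        · rw [if_pos hryx]
          exact Finset.card_erase_add_one (Finset.mem_filter.mpr ⟨hxV, hryx⟩)
        · rw [if_neg hryx, add_zero, Finset.erase_eq_of_notMem]
          simp [hryx]
      have e2 : (V'.filter (fun y => r y x)) = V.filter (r x) := by
        ext y
        simp only [Finset.mem_filter, hV', Finset.mem_erase]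
        constructor
        · rintro ⟨⟨hyx, hyV⟩, hr⟩; exact ⟨hyV, hsymm _ _ hr⟩
          
        · rintro ⟨hyV, hr⟩
          exact ⟨⟨fun h => hirr x (h ▸ hr), hyV⟩, hsymm x y hr⟩
      have e3 : ∑ y ∈ V', (V.filter (r y)).card
          = ∑ y ∈ V', (V'.filter (r y)).card + (V.filter (r x)).card := by
        rw [← Finset.sum_congr rfl e1, Finset.sum_add_distrib]
        congr 1
        rw [← e2, Finset.card_filter]
      have e4 : ∑ y ∈ V', (V.filter (r y)).card + (V.filter (r x)).card
          = ∑ y ∈ V, (V.filter (r y)).card := Finset.sum_erase_add V _ hxV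
      have hcard : V.card = V'.card + 1 := by
        rw [hV', Finset.card_erase_of_mem hxV]
        have : 1 ≤ V.card := Finset.card_pos.mpr ⟨x, hxV⟩
        omega
      have hsum' : 2 * d * V'.card < ∑ y ∈ V', (V'.filter (r y)).card := by
        have e5 : 2 * d * V.card = 2 * d * V'.card + 2 * d := by rw [hcard]; ring
        omega
      obtain ⟨U, hU1, hU2, hU3⟩ := ih V' hss hsum'
      exact ⟨U, hU1.trans (Finset.erase_subset _ _), hU2, hU3⟩

lemma build_copy {n m N : ℕ} {α : Type} (c : Sym2 (Fin N) → α) (i : α)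
    (u v : Fin N) (S T : Finset (Fin N)) (hS : S.card = n) (hT : T.card = m)
    (huv : u ≠ v) (hdisj : Disjoint S T)
    (huS : u ∉ S) (huT : u ∉ T) (hvS : v ∉ S) (hvT : v ∉ T)
    (cuv : c s(u, v) = i) (cS : ∀ x ∈ S, c s(u, x) = i)
    (cT : ∀ x ∈ T, c s(v, x) = i) :
    HasMonoCopy (doubleStar n m) c := by
  set eS := S.orderIsoOfFin hS with heS
  set eT := T.orderIsoOfFin hT with heT
  set g : Fin (n + m + 2) → Fin N := fun j =>
    if h0 : j.val = 0 then u else if h1 : j.val = 1 then v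
    else if h2 : j.val ≤ n + 1 then (eS ⟨j.val - 2, by omega⟩ : Fin N)
    else (eT ⟨j.val - (n + 2), by omega⟩ : Fin N) with hgdef
  have hg0 : ∀ j : Fin (n + m + 2), j.val = 0 → g j = u := by
    intro j hj; simp only [hgdef]; rw [dif_pos hj]
  have hg1 : ∀ j : Fin (n + m + 2), j.val = 1 → g j = v := by
    intro j hj; simp only [hgdef]; rw [dif_neg (by omega), dif_pos hj]
  have hgS : ∀ j : Fin (n + m + 2), ∀ (h1 : 2 ≤ j.val) (h2 : j.val ≤ n + 1),
      g j = (eS ⟨j.val - 2, by omega⟩ : Fin N) := by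
    intro j h1 h2; simp only [hgdef]
    rw [dif_neg (by omega), dif_neg (by omega), dif_pos h2]
  have hgT : ∀ j : Fin (n + m + 2), ∀ (h1 : n + 2 ≤ j.val),
      g j = (eT ⟨j.val - (n + 2), by omega⟩ : Fin N) := by
    intro j h1; simp only [hgdef]
    rw [dif_neg (by omega), dif_neg (by omega), dif_neg (by omega)]
  have hgSmem : ∀ j : Fin (n + m + 2), 2 ≤ j.val → j.val ≤ n + 1 → g j ∈ S := by
    intro j h1 h2; rw [hgS j h1 h2]; exact (eS _).2
  have hgTmem : ∀ j : Fin (n + m + 2), n + 2 ≤ j.val → g j ∈ T := by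
    intro j h1; rw [hgT j h1]; exact (eT _).2
  have hinj : Function.Injective g := by
    intro a b hab
    have ha := a.isLt
    have hb := b.isLt
    have ca : a.val = 0 ∨ a.val = 1 ∨ (2 ≤ a.val ∧ a.val ≤ n + 1) ∨ n + 2 ≤ a.val := by omega
    have cb : b.val = 0 ∨ b.val = 1 ∨ (2 ≤ b.val ∧ b.val ≤ n + 1) ∨ n + 2 ≤ b.val := by omega
    rcases ca with ha0 | ha1 | ⟨haS1, haS2⟩ | haT <;>
      rcases cb with hb0 | hb1 | ⟨hbS1, hbS2⟩ | hbT
    · exact Fin.ext (by omega)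
    · exact absurd (by rw [← hg0 a ha0, hab, hg1 b hb1]) huv
    · exact absurd (by rw [← hg0 a ha0, hab]; exact hgSmem b hbS1 hbS2 : u ∈ S) huS
    · exact absurd (by rw [← hg0 a ha0, hab]; exact hgTmem b hbT : u ∈ T) huT
    · exact absurd (by rw [← hg0 b hb0, ← hab, hg1 a ha1]) huv
    · exact Fin.ext (by omega)
    · exact absurd (by rw [← hg1 a ha1, hab]; exact hgSmem b hbS1 hbS2 : v ∈ S) hvS
    · exact absurd (by rw [← hg1 a ha1, hab]; exact hgTmem b hbT : v ∈ T) hvT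
    · exact absurd (by rw [← hg0 b hb0, ← hab]; exact hgSmem a haS1 haS2 : u ∈ S) huS
    · exact absurd (by rw [← hg1 b hb1, ← hab]; exact hgSmem a haS1 haS2 : v ∈ S) hvS
    · rw [hgS a haS1 haS2, hgS b hbS1 hbS2] at hab
      have := eS.injective (Subtype.coe_injective hab)
      have := Fin.mk.injEq _ _ _ _ ▸ this
      exact Fin.ext (by omega)
    · exact absurd (Finset.disjoint_left.mp hdisj (hgSmem a haS1 haS2)
        (by rw [hab]; exact hgTmem b hbT)) (fun h => h)
    · exact absurd (by rw [← hg0 b hb0, ← hab]; exact hgTmem a haT : u ∈ T) huT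
    · exact absurd (by rw [← hg1 b hb1, ← hab]; exact hgTmem a haT : v ∈ T) hvT
    · exact absurd (Finset.disjoint_left.mp hdisj (hgSmem b hbS1 hbS2)
        (by rw [← hab]; exact hgTmem a haT)) (fun h => h)
    · rw [hgT a haT, hgT b hbT] at hab
      have := eT.injective (Subtype.coe_injective hab)
      have := Fin.mk.injEq _ _ _ _ ▸ this
      exact Fin.ext (by omega)
  refine ⟨⟨g, hinj⟩, i, ?_⟩
  intro x y hadj
  rw [doubleStar, SimpleGraph.fromRel_adj] at hadj
  obtain ⟨hne, hrel⟩ := hadj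
  simp only [Function.Embedding.coeFn_mk]
  rcases hrel with (⟨hx, hy⟩ | ⟨hx, hy1, hy2⟩ | ⟨hx, hy⟩) |
    (⟨hy, hx'⟩ | ⟨hy, hx1, hx2⟩ | ⟨hy, hx'⟩)
  · rw [hg0 x hx, hg1 y hy]; exact cuv
  · rw [hg0 x hx]; exact cS _ (hgSmem y hy1 hy2)
  · rw [hg1 x hx]; exact cT _ (hgTmem y hy)
  · rw [hg0 y hy, hg1 x hx', Sym2.eq_swap]; exact cuv
  · rw [hg0 y hy, Sym2.eq_swap]; exact cS _ (hgSmem x hx1 hx2)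
  · rw [hg1 y hy, Sym2.eq_swap]; exact cT _ (hgTmem x hx')

lemma degree_sum_colors {N k : ℕ} (c : Sym2 (Fin N) → Fin k) (x : Fin N) :
    ∑ i : Fin k, (Finset.univ.filter (fun y : Fin N => x ≠ y ∧ c s(x, y) = i)).card
      = N - 1 := by
  have h1 : ∀ i : Fin k,
      (Finset.univ.filter (fun y : Fin N => x ≠ y ∧ c s(x, y) = i)).card
      = ∑ y : Fin N, if x ≠ y ∧ c s(x, y) = i then 1 else 0 := by
    intro i; rw [Finset.card_filter]
  simp only [h1]
  rw [Finset.sum_comm]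
  have h2 : ∀ y : Fin N,
      (∑ i : Fin k, if x ≠ y ∧ c s(x, y) = i then 1 else 0)
      = if x ≠ y then 1 else 0 := by
    intro y
    by_cases hxy : x ≠ y
    · rw [if_pos hxy]
      have : ∀ i : Fin k, (if x ≠ y ∧ c s(x, y) = i then 1 else 0)
          = if c s(x, y) = i then 1 else 0 := by
        intro i; by_cases h : c s(x, y) = i <;> simp [h, hxy]
      simp only [this]
      rw [Finset.sum_ite_eq (Finset.univ : Finset (Fin k)) (c s(x, y)) (fun _ => 1)]
      simp
    · simp [hxy]
  simp only [h2]
  rw [← Finset.card_filter]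
  have : Finset.univ.filter (fun y : Fin N => x ≠ y) = Finset.univ.erase x := by
    ext y; simp only [Finset.mem_filter, Finset.mem_univ, true_and, Finset.mem_erase,
      and_true]
    exact ⟨fun h h2 => h h2.symm, fun h h2 => h h2.symm⟩
  rw [this, Finset.card_erase_of_mem (Finset.mem_univ x), Finset.card_univ, Fintype.card_fin]

lemma isRamsey_big (n m k : ℕ) (hmn : m ≤ n) (hk : 1 ≤ k) :
    IsRamsey (doubleStar n m) k (2 * k * (n + m + 1) + 1) := by
  intro c
  have htot : ∑ i : Fin k, ∑ x : Fin (2 * k * (n + m + 1) + 1),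
      (Finset.univ.filter (fun y : Fin (2 * k * (n + m + 1) + 1) => x ≠ y ∧ c s(x, y) = i)).card
      = (2 * k * (n + m + 1) + 1) * (2 * k * (n + m + 1) + 1 - 1) := by
    rw [Finset.sum_comm]
    have : ∀ x : Fin (2 * k * (n + m + 1) + 1), ∑ i : Fin k,
        (Finset.univ.filter (fun y : Fin (2 * k * (n + m + 1) + 1) => x ≠ y ∧ c s(x, y) = i)).card = (2 * k * (n + m + 1) + 1) - 1 :=
      fun x => degree_sum_colors c x
    simp only [this]
    rw [Finset.sum_const, Finset.card_univ, Fintype.card_fin, smul_eq_mul]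
  have hex : ∃ i : Fin k, 2 * (n + m) * (2 * k * (n + m + 1) + 1) < ∑ x : Fin (2 * k * (n + m + 1) + 1),
      (Finset.univ.filter (fun y : Fin (2 * k * (n + m + 1) + 1) => x ≠ y ∧ c s(x, y) = i)).card := by
    by_contra h
    push_neg at h
    have hle : ∑ i : Fin k, ∑ x : Fin (2 * k * (n + m + 1) + 1),
        (Finset.univ.filter (fun y : Fin (2 * k * (n + m + 1) + 1) => x ≠ y ∧ c s(x, y) = i)).card
        ≤ k * (2 * (n + m) * (2 * k * (n + m + 1) + 1)) := by
      calc _ ≤ ∑ _i : Fin k, 2 * (n + m) * (2 * k * (n + m + 1) + 1) := Finset.sum_le_sum (fun i _ => h i)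
        _ = k * (2 * (n + m) * (2 * k * (n + m + 1) + 1)) := by
            rw [Finset.sum_const, Finset.card_univ, Fintype.card_fin, smul_eq_mul]
    rw [htot] at hle
    rw [Nat.add_sub_cancel] at hle
    have h2 : k * (2 * (n + m) * (2 * k * (n + m + 1) + 1)) + 2 * k * (2 * k * (n + m + 1) + 1)
        = (2 * k * (n + m + 1) + 1) * (2 * k * (n + m + 1)) := by ring
    have h3 : 0 < 2 * k * (2 * k * (n + m + 1) + 1) := by positivity
    omega
  obtain ⟨i, hi⟩ := hex
  obtain ⟨U, hUsub, hUne, hmin⟩ := minDegSub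
    (fun x y : Fin (2 * k * (n + m + 1) + 1) => x ≠ y ∧ c s(x, y) = i)
    (fun x y h => ⟨h.1.symm, by rw [Sym2.eq_swap]; exact h.2⟩)
    (fun x h => h.1 rfl) (n + m) Finset.univ
    (by rwa [Finset.card_univ, Fintype.card_fin])
  obtain ⟨u, hu⟩ := hUne
  have hud := hmin u hu
  have hfil_ne : (U.filter (fun y => u ≠ y ∧ c s(u, y) = i)).Nonempty :=
    Finset.card_pos.mp (by omega)
  obtain ⟨v, hv⟩ := hfil_ne
  obtain ⟨hvU, huv, cuv⟩ := Finset.mem_filter.mp hv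
  -- choose S
  have hScard : n ≤ ((U.filter (fun y => u ≠ y ∧ c s(u, y) = i)).erase v).card := by
    rw [Finset.card_erase_of_mem hv]; omega
  obtain ⟨S, hSsub, hScard⟩ := Finset.exists_subset_card_eq hScard
  have hvd := hmin v hvU
  have huB : u ∈ U.filter (fun y => v ≠ y ∧ c s(v, y) = i) :=
    Finset.mem_filter.mpr ⟨hu, fun h => huv h.symm, by rw [Sym2.eq_swap]; exact cuv⟩
  have hTcard : m ≤ (((U.filter (fun y => v ≠ y ∧ c s(v, y) = i)).erase u) \ S).card := by
    have h1 := Finset.card_le_card_sdiff_add_card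
      (s := (U.filter (fun y => v ≠ y ∧ c s(v, y) = i)).erase u) (t := S)
    rw [Finset.card_erase_of_mem huB] at h1
    omega
  obtain ⟨T, hTsub, hTcard⟩ := Finset.exists_subset_card_eq hTcard
  refine build_copy c i u v S T hScard hTcard huv ?_ ?_ ?_ ?_ ?_ cuv ?_ ?_
  · exact Finset.disjoint_left.mpr (fun {x} hxS hxT =>
      (Finset.mem_sdiff.mp (hTsub hxT)).2 hxS)
  · intro h
    exact (Finset.mem_filter.mp (Finset.mem_of_mem_erase (hSsub h))).2.1 rfl
  · intro h
    exact (Finset.mem_erase.mp (Finset.mem_sdiff.mp (hTsub h)).1).1 rfl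
  · intro h
    exact (Finset.mem_erase.mp (hSsub h)).1 rfl
  · intro h
    exact (Finset.mem_filter.mp (Finset.mem_of_mem_erase
      (Finset.mem_sdiff.mp (hTsub h)).1)).2.1 rfl
  · intro x hx
    exact (Finset.mem_filter.mp (Finset.mem_of_mem_erase (hSsub hx))).2.2
  · intro x hx
    exact (Finset.mem_filter.mp (Finset.mem_of_mem_erase
      (Finset.mem_sdiff.mp (hTsub hx)).1)).2.2

def dpair (N : ℕ) (x y : Fin N) : ℕ :=
  min ((x.val + N - y.val) % N) ((y.val + N - x.val) % N)

lemma dpair_comm (N : ℕ) (x y : Fin N) : dpair N x y = dpair N y x := by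
  rw [dpair, dpair, min_comm]

lemma delta_spec {N a b : ℕ} (ha : a < N) (hb : b < N) (hab : a ≠ b) :
    ((a + N - b) % N) + ((b + N - a) % N) = N := by
  rcases Nat.lt_or_ge a b with h | h
  · have e1 : (a + N - b) % N = a + N - b := Nat.mod_eq_of_lt (by omega)
    have e2 : b + N - a = (b - a) + N := by omega
    have e3 : (b + N - a) % N = b - a := by
      rw [e2, Nat.add_mod_right, Nat.mod_eq_of_lt (by omega)]
    omega
  · have h' : b < a := by omega
    have e1 : (b + N - a) % N = b + N - a := Nat.mod_eq_of_lt (by omega)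
    have e2 : a + N - b = (a - b) + N := by omega
    have e3 : (a + N - b) % N = a - b := by
      rw [e2, Nat.add_mod_right, Nat.mod_eq_of_lt (by omega)]
    omega

lemma delta_pos {N a b : ℕ} (ha : a < N) (hb : b < N) (hab : a ≠ b) :
    0 < (a + N - b) % N := by
  rcases Nat.lt_or_ge a b with h | h
  · have e1 : (a + N - b) % N = a + N - b := Nat.mod_eq_of_lt (by omega)
    omega
  · have h' : b < a := by omega
    have e2 : a + N - b = (a - b) + N := by omega
    have e3 : (a + N - b) % N = a - b := by
      rw [e2, Nat.add_mod_right, Nat.mod_eq_of_lt (by omega)]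
    omega

lemma dpair_pos {N : ℕ} {x y : Fin N} (hxy : x ≠ y) : 0 < dpair N x y := by
  have h1 := delta_pos x.isLt y.isLt (fun h => hxy (Fin.ext h))
  have h2 := delta_pos y.isLt x.isLt (fun h => hxy (Fin.ext h.symm))
  rw [dpair]
  omega

lemma dpair_le_half {N : ℕ} {x y : Fin N} (hxy : x ≠ y) : 2 * dpair N x y ≤ N := by
  have h1 := delta_spec x.isLt y.isLt (fun h => hxy (Fin.ext h))
  rw [dpair]
  omega

/-- recovery: y is determined by `dpair` up to two possibilities -/
lemma dpair_recover {N : ℕ} {x y : Fin N} (hxy : y ≠ x) :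
    y.val = (x.val + dpair N x y) % N ∨ y.val = (x.val + (N - dpair N x y)) % N := by
  have hne : x.val ≠ y.val := fun h => hxy (Fin.ext h.symm)
  have hsum := delta_spec x.isLt y.isLt hne
  have hyx : (x.val + ((y.val + N - x.val) % N)) % N = y.val := by
    have hcong : (x.val + (y.val + N - x.val) % N) % N
        = (x.val + (y.val + N - x.val)) % N :=
      Nat.ModEq.add_left x.val (Nat.mod_modEq _ N)
    have e1 : x.val + (y.val + N - x.val) = y.val + N := by
      have := x.isLt; omega
    rw [hcong, e1, Nat.add_mod_right, Nat.mod_eq_of_lt y.isLt]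
  rcases min_cases ((x.val + N - y.val) % N) ((y.val + N - x.val) % N) with
    ⟨hmin, hle⟩ | ⟨hmin, hlt⟩
  · right
    have : N - dpair N x y = (y.val + N - x.val) % N := by rw [dpair, hmin]; omega
    rw [this, hyx]
  · left
    rw [dpair, hmin, hyx]

lemma dpair_dvd_mod_eq {N q : ℕ} (hqN : q ∣ N) {x y : Fin N}
    (hd : q ∣ dpair N x y) : x.val % q = y.val % q := by
  rcases eq_or_ne x y with rfl | hxy
  · rfl
  have hne : x.val ≠ y.val := fun h => hxy (Fin.ext h)
  have hdvd : q ∣ (x.val + N - y.val) % N ∨ q ∣ (y.val + N - x.val) % N := by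
    rcases min_cases ((x.val + N - y.val) % N) ((y.val + N - x.val) % N) with
      ⟨hmin, _⟩ | ⟨hmin, _⟩
    · left; rw [dpair, hmin] at hd; exact hd
    · right; rw [dpair, hmin] at hd; exact hd
  have key : ∀ a b : ℕ, a < N → b < N → q ∣ (a + N - b) % N → a % q = b % q := by
    intro a b ha hb hab
    have h1 : q ∣ (a + N - b) := (Nat.dvd_mod_iff hqN).mp hab
    obtain ⟨e, he⟩ := h1
    obtain ⟨f, hf⟩ := hqN
    have h2 : b + q * e = a + q * f := by omega
    have h3 : (b + q * e) % q = (a + q * f) % q := by rw [h2]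
    rw [Nat.add_mul_mod_self_left, Nat.add_mul_mod_self_left] at h3
    exact h3.symm
  rcases hdvd with h | h
  · exact key _ _ x.isLt y.isLt h
  · exact (key _ _ y.isLt x.isLt h).symm

def colorD (q k h d : ℕ) : ℕ :=
  if q ∣ d then k - 1 else min (k - 2) ((d - d / q - 1) / h)

lemma colorD_le (q k h d : ℕ) : colorD q k h d ≤ k - 1 := by
  rw [colorD]; split_ifs
  · exact le_rfl
  · exact le_trans (min_le_left _ _) (by omega)

def lowerColor (N q k h : ℕ) (hk : 0 < k) : Sym2 (Fin N) → Fin k :=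
  Sym2.lift ⟨fun x y => ⟨min (k - 1) (colorD q k h (dpair N x y)),
    lt_of_le_of_lt (min_le_left _ _) (by omega)⟩,
    fun x y => by simp only [dpair_comm]⟩

lemma lowerColor_eval {N q k h : ℕ} (hk : 0 < k) (x y : Fin N) :
    (lowerColor N q k h hk s(x, y)).val = min (k - 1) (colorD q k h (dpair N x y)) := rfl

lemma j_mono {q : ℕ} (hq : 1 ≤ q) {a b : ℕ} (hab : a ≤ b) : a - a / q ≤ b - b / q := by
  have h1 : b / q ≤ a / q + (b - a) := by
    have hle : b ≤ a + q * (b - a) := by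
      have : b - a ≤ q * (b - a) := Nat.le_mul_of_pos_left _ hq
      omega
    calc b / q ≤ (a + q * (b - a)) / q := Nat.div_le_div_right hle
      _ = a / q + (b - a) := by rw [Nat.add_mul_div_left _ _ hq]
  have h2 : a / q ≤ a := Nat.div_le_self a q
  have h3 : b / q ≤ b := Nat.div_le_self b q
  omega

lemma j_strict {q : ℕ} (hq : 1 ≤ q) {d d' : ℕ} (hd : d < d') (hnd : ¬ q ∣ d') :
    d - d / q < d' - d' / q := by
  have hd1 : 1 ≤ d' := by omega
  have h1 : d - d / q ≤ (d' - 1) - (d' - 1) / q := j_mono hq (by omega)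
  have h2 : d' / q = (d' - 1) / q := by
    have := @Nat.succ_div (d' - 1) q
    rw [show d' - 1 + 1 = d' by omega] at this
    rw [this, if_neg hnd, add_zero]
  have h3 : (d' - 1) / q ≤ d' - 1 := Nat.div_le_self _ _
  have hq2 : 2 ≤ q := by
    rcases Nat.lt_or_ge q 2 with h | h
    · exfalso; apply hnd
      have : q = 1 := by omega
      rw [this]; exact one_dvd _
    · exact h
  have h4 : d' / q < d' := Nat.div_lt_self (by omega) (by omega)
  omega

lemma Dset_card {q k h s N i : ℕ} (hq : 2 ≤ q) (hh : 1 ≤ h) (hk : 2 ≤ k)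
    (hN : N = 2 * q * s) (h7 : (q - 1) * s = (k - 1) * h) (hi : i ≤ k - 2) :
    ((Finset.Icc 1 (N / 2)).filter (fun d => colorD q k h d = i)).card ≤ h := by
  have key : ∀ d ∈ (Finset.Icc 1 (N / 2)).filter (fun d => colorD q k h d = i),
      ¬ q ∣ d ∧ 1 ≤ d - d / q ∧ d - d / q ≤ (k - 1) * h ∧
      (d - d / q - 1) / h = i := by
    intro d hd
    obtain ⟨hdIcc, hcol⟩ := Finset.mem_filter.mp hd
    obtain ⟨hd1, hd2⟩ := Finset.mem_Icc.mp hdIcc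
    have hnd : ¬ q ∣ d := by
      intro hdvd
      rw [colorD, if_pos hdvd] at hcol
      omega
    have hj1 : 1 ≤ d - d / q := by
      have := Nat.div_lt_self (show 0 < d by omega) (show 1 < q by omega)
      omega
    have hNhalf : N / 2 = q * s := by
      have hN2 : N = 2 * (q * s) := by rw [hN]; ring
      omega
    have hjub : d - d / q ≤ (k - 1) * h := by
      have h1 : d - d / q ≤ N / 2 - (N / 2) / q := j_mono (by omega) hd2
      rw [hNhalf, Nat.mul_div_cancel_left s (by omega : 0 < q)] at h1
      have h2 : q * s - s = (q - 1) * s := by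
        rw [Nat.sub_mul, one_mul]
      omega
    have hr : (d - d / q - 1) / h ≤ k - 2 := by
      have hlt : d - d / q - 1 < (k - 1) * h := by
        have hkh : 1 ≤ (k - 1) * h := by
          have := Nat.mul_le_mul (show 1 ≤ k - 1 by omega) hh
          omega
        omega
      have := (Nat.div_lt_iff_lt_mul (show 0 < h by omega)).mpr hlt
      omega
    refine ⟨hnd, hj1, hjub, ?_⟩
    rw [colorD, if_neg hnd] at hcol
    omega
  have hmaps : ∀ d ∈ (Finset.Icc 1 (N / 2)).filter (fun d => colorD q k h d = i),
      d - d / q - 1 ∈ Finset.Ico (i * h) (i * h + h) := by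
    intro d hd
    obtain ⟨hnd, hj1, hjub, hr⟩ := key d hd
    rw [Finset.mem_Ico]
    constructor
    · calc i * h = (d - d / q - 1) / h * h := by rw [hr]
        _ ≤ d - d / q - 1 := Nat.div_mul_le_self _ _
    · have hmod := Nat.div_add_mod (d - d / q - 1) h
      have hlt := Nat.mod_lt (d - d / q - 1) (show 0 < h by omega)
      rw [hr] at hmod
      have h5 : d - d / q - 1 < h * i + h := by linarith
      have h6 : i * h = h * i := Nat.mul_comm i h
      linarith
  have hinj : Set.InjOn (fun d => d - d / q - 1)
      ((Finset.Icc 1 (N / 2)).filter (fun d => colorD q k h d = i)) := by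
    intro d hd d' hd' heq
    have k1 := key d hd
    have k2 := key d' hd'
    simp only at heq
    rcases lt_trichotomy d d' with hlt | he | hlt
    · exact absurd (j_strict (by omega) hlt k2.1) (by omega)
    · exact he
    · exact absurd (j_strict (by omega) hlt k1.1) (by omega)
  calc ((Finset.Icc 1 (N / 2)).filter (fun d => colorD q k h d = i)).card
      ≤ (Finset.Ico (i * h) (i * h + h)).card :=
        Finset.card_le_card_of_injOn _ hmaps hinj
    _ = h := by rw [Nat.card_Ico]; omega

lemma card_residue {N q r : ℕ} (hq : 0 < q) (hr : r < q) (hdvd : q ∣ N) :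
    ((Finset.univ : Finset (Fin N)).filter (fun x => x.val % q = r)).card = N / q := by
  obtain ⟨f, hf⟩ := hdvd
  have hNq : N / q = f := by rw [hf, Nat.mul_div_cancel_left f hq]
  rw [hNq]
  have : ((Finset.univ : Finset (Fin N)).filter (fun x => x.val % q = r)).card
      = (Finset.range f).card := by
    apply Finset.card_bij' (fun x _ => x.val / q)
      (fun j hj => ⟨q * j + r, by
        rw [Finset.mem_range] at hj
        have h1 : q * (j + 1) ≤ q * f := Nat.mul_le_mul_left q (by omega)
        have h2 : q * (j + 1) = q * j + q := by ring
        omega⟩)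
    · intro x hx
      rw [Finset.mem_filter] at hx
      apply Fin.ext
      simp only
      have h1 := Nat.div_add_mod x.val q
      rw [hx.2] at h1
      omega
    · intro j hj
      simp only
      rw [Nat.mul_add_div hq, Nat.div_eq_of_lt hr, add_zero]
    · intro x hx
      rw [Finset.mem_filter] at hx
      rw [Finset.mem_range]
      have h1 := Nat.div_add_mod x.val q
      have h2 : x.val < q * f := by rw [← hf]; exact x.isLt
      by_contra hc
      push_neg at hc
      have h3 := Nat.mul_le_mul_left q hc
      omega
    · intro j hj
      rw [Finset.mem_filter]
      exact ⟨Finset.mem_univ _, by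
        simp only
        rw [Nat.mul_add_mod, Nat.mod_eq_of_lt hr]⟩
  rw [this, Finset.card_range]

lemma lowerColor_deg {N q k h s : ℕ} (hq : 2 ≤ q) (hh : 1 ≤ h) (hk : 2 ≤ k)
    (hk0 : 0 < k) (hN : N = 2 * q * s) (h7 : (q - 1) * s = (k - 1) * h)
    (x : Fin N) (i : Fin k) (hi : i.val ≤ k - 2) :
    (Finset.univ.filter
      (fun y : Fin N => y ≠ x ∧ lowerColor N q k h hk0 s(x, y) = i)).card ≤ 2 * h := by
  set A := Finset.univ.filter
    (fun y : Fin N => y ≠ x ∧ lowerColor N q k h hk0 s(x, y) = i) with hA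
  have hfib : ∀ dv ∈ A.image (fun y => dpair N x y),
      (A.filter (fun y => dpair N x y = dv)).card ≤ 2 := by
    intro dv _
    have hsub : A.filter (fun y => dpair N x y = dv) ⊆
        {⟨(x.val + dv) % N, Nat.mod_lt _ x.pos⟩, ⟨(x.val + (N - dv)) % N, Nat.mod_lt _ x.pos⟩} := by
      intro y hy
      obtain ⟨hyA, hyd⟩ := Finset.mem_filter.mp hy
      obtain ⟨-, hyx, -⟩ := Finset.mem_filter.mp hyA
      rcases dpair_recover hyx with h1 | h1 <;> rw [Finset.mem_insert, Finset.mem_singleton]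
      · left; apply Fin.ext; rw [h1, hyd]
      · right; apply Fin.ext; rw [h1, hyd]
    calc (A.filter (fun y => dpair N x y = dv)).card ≤ _ := Finset.card_le_card hsub
      _ ≤ 2 := by
        apply le_trans (Finset.card_insert_le _ _)
        simp
  have h1 : A.card ≤ 2 * (A.image (fun y => dpair N x y)).card :=
    Finset.card_le_mul_card_image _ 2 hfib
  have h2 : A.image (fun y => dpair N x y) ⊆
      (Finset.Icc 1 (N / 2)).filter (fun d => colorD q k h d = i.val) := by
    intro dv hdv
    obtain ⟨y, hyA, rfl⟩ := Finset.mem_image.mp hdv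
    obtain ⟨-, hyx, hcol⟩ := Finset.mem_filter.mp hyA
    have hxy : x ≠ y := fun hxy => hyx hxy.symm
    rw [Finset.mem_filter, Finset.mem_Icc]
    refine ⟨⟨dpair_pos hxy, by have := dpair_le_half hxy; omega⟩, ?_⟩
    have hval : (lowerColor N q k h hk0 s(x, y)).val = i.val := by rw [hcol]
    rw [lowerColor_eval] at hval
    rw [min_eq_right (colorD_le q k h _)] at hval
    exact hval
  have h3 := Finset.card_le_card h2
  have h4 := Dset_card hq hh hk hN h7 hi
  omega

lemma not_isRamsey (n m k N q s h : ℕ)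
    (h1 : n = 2 * h) (h2 : 1 ≤ h) (h3 : m ≤ n) (h4 : 1 ≤ m)
    (h5 : N = 2 * q * s) (h6 : n + m + 1 = 2 * s) (h7 : (q - 1) * s = (k - 1) * h)
    (h8 : 2 ≤ q) (h9 : 2 ≤ k) :
    ¬ IsRamsey (doubleStar n m) k N := by
  intro hR
  have hk0 : 0 < k := by omega
  have hqN : q ∣ N := ⟨2 * s, by rw [h5]; ring⟩
  obtain ⟨f, i, hmono⟩ := hR (lowerColor N q k h hk0)
  have adj01 : (doubleStar n m).Adj ⟨0, by omega⟩ ⟨1, by omega⟩ := by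
    rw [doubleStar, SimpleGraph.fromRel_adj]
    exact ⟨by simp [Fin.ext_iff], Or.inl (Or.inl ⟨rfl, rfl⟩)⟩
  have adj0S : ∀ w : Fin (n + m + 2), 1 ≤ w.val → w.val ≤ n + 1 →
      (doubleStar n m).Adj ⟨0, by omega⟩ w := by
    intro w hw1 hw2
    rw [doubleStar, SimpleGraph.fromRel_adj]
    refine ⟨by simp [Fin.ext_iff]; omega, Or.inl ?_⟩
    rcases Nat.eq_or_lt_of_le hw1 with hw | hw
    · exact Or.inl ⟨rfl, hw.symm⟩
    · exact Or.inr (Or.inl ⟨rfl, by omega, hw2⟩)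
  have adj1T : ∀ w : Fin (n + m + 2), n + 2 ≤ w.val →
      (doubleStar n m).Adj ⟨1, by omega⟩ w := by
    intro w hw1
    rw [doubleStar, SimpleGraph.fromRel_adj]
    exact ⟨by simp [Fin.ext_iff]; omega, Or.inl (Or.inr (Or.inr ⟨rfl, hw1⟩))⟩
  rcases Nat.lt_or_ge i.val (k - 1) with hik | hik
  · -- small color: bounded degree
    have hi : i.val ≤ k - 2 := by omega
    set x0 : Fin N := f ⟨0, by omega⟩ with hx0
    set A := Finset.univ.filter
      (fun y : Fin N => y ≠ x0 ∧ lowerColor N q k h hk0 s(x0, y) = i) with hA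
    have hlb : n + 1 ≤ A.card := by
      have := Finset.card_le_card_of_injOn
        (fun j : Fin (n + 1) => f ⟨j.val + 1, by omega⟩)
        (s := Finset.univ) (t := A) ?_ ?_
      · rwa [Finset.card_univ, Fintype.card_fin] at this
      · intro j _
        rw [hA, Finset.mem_coe, Finset.mem_filter]
        refine ⟨Finset.mem_univ _, fun heq => ?_, ?_⟩
        · have := f.injective heq
          rw [Fin.ext_iff] at this
          simp at this
        · exact hmono _ _ (adj0S ⟨j.val + 1, by omega⟩
            (by show 1 ≤ j.val + 1; omega) (by show j.val + 1 ≤ n + 1; omega))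
      · intro a _ b _ heq
        have := f.injective heq
        rw [Fin.ext_iff] at this
        simp at this
        exact Fin.ext this
    have hub := lowerColor_deg h8 h2 h9 hk0 h5 h7 x0 i hi
    rw [← hA] at hub
    omega
  · -- big color: clique color
    have hik' : i.val = k - 1 := by have := i.isLt; omega
    have hdvd_edge : ∀ a b : Fin (n + m + 2), (doubleStar n m).Adj a b →
        (f a).val % q = (f b).val % q := by
      intro a b hab
      have hc := hmono a b hab
      have hval : (lowerColor N q k h hk0 s(f a, f b)).val = i.val := by rw [hc]
      rw [lowerColor_eval, min_eq_right (colorD_le q k h _)] at hval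
      have hq_dvd : q ∣ dpair N (f a) (f b) := by
        by_contra hnd
        rw [colorD, if_neg hnd] at hval
        have hle : min (k - 2) ((dpair N (f a) (f b) - dpair N (f a) (f b) / q - 1) / h)
            ≤ k - 2 := min_le_left _ _
        omega
      exact dpair_dvd_mod_eq hqN hq_dvd
    have hall : ∀ w : Fin (n + m + 2), (f w).val % q = (f ⟨0, by omega⟩).val % q := by
      intro w
      have hw := w.isLt
      have c4 : w.val = 0 ∨ w.val = 1 ∨ (2 ≤ w.val ∧ w.val ≤ n + 1) ∨ n + 2 ≤ w.val := by
        omega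
      rcases c4 with hw0 | hw1 | ⟨hwa, hwb⟩ | hwc
      · have : w = ⟨0, by omega⟩ := by apply Fin.ext; show w.val = 0; omega
        rw [this]
      · have : w = ⟨1, by omega⟩ := by apply Fin.ext; show w.val = 1; omega
        rw [this]
        exact (hdvd_edge _ _ adj01).symm
      · exact (hdvd_edge _ _ (adj0S w (by omega) hwb)).symm
      · rw [(hdvd_edge _ _ (adj1T w hwc)).symm]
        exact (hdvd_edge _ _ adj01).symm
    have hinj : n + m + 2 ≤ ((Finset.univ : Finset (Fin N)).filter
        (fun x => x.val % q = (f ⟨0, by omega⟩).val % q)).card := by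
      have := Finset.card_le_card_of_injOn (fun w : Fin (n + m + 2) => f w)
        (s := Finset.univ)
        (t := (Finset.univ : Finset (Fin N)).filter
          (fun x => x.val % q = (f ⟨0, by omega⟩).val % q)) ?_ ?_
      · rwa [Finset.card_univ, Fintype.card_fin] at this
      · intro w _
        rw [Finset.mem_coe, Finset.mem_filter]
        exact ⟨Finset.mem_univ _, hall w⟩
      · intro a _ b _ heq
        exact f.injective heq
    rw [card_residue (by omega) (Nat.mod_lt _ (by omega)) hqN] at hinj
    have hNq : N / q = 2 * s := by
      have : N = q * (2 * s) := by rw [h5]; ring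
      rw [this, Nat.mul_div_cancel_left _ (show 0 < q by omega)]
    omega

lemma ramsey_mono {W : Type} (H : SimpleGraph W) (k : ℕ) {N1 N2 : ℕ} (hle : N1 ≤ N2)
    (hR : IsRamsey H k N1) : IsRamsey H k N2 := by
  intro c
  obtain ⟨f, i, hf⟩ := hR (fun e => c (e.map (Fin.castLE hle)))
  refine ⟨f.trans (Fin.castLEEmb hle), i, fun v w h => ?_⟩
  have := hf v w h
  simpa [Sym2.map_pair_eq] using this

/-- If `n ≥ m ≥ 1`, `k ≥ 2`, `n` is even, `m` is odd, and `(n+m+1)/2`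
divides `k − 1`, then `r(S(n,m); k) ≥ kn + m + 2`. -/
theorem stmt_6 (n m k : ℕ) (hnm : m ≤ n) (hm : 1 ≤ m) (hk : 2 ≤ k)
    (hne : Even n) (hmo : Odd m) (hdvd : (n + m + 1) / 2 ∣ (k - 1)) :
    ramseyNumber (doubleStar n m) k ≥ k * n + m + 2 := by
  obtain ⟨b, hb⟩ := hne
  obtain ⟨cc, hcc⟩ := hmo
  have hs2 : (n + m + 1) / 2 = b + cc + 1 := by omega
  rw [hs2] at hdvd
  obtain ⟨a, ha⟩ := hdvd
  have ha1 : 1 ≤ a := by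
    rcases Nat.eq_zero_or_pos a with rfl | h
    · simp at ha; omega
    · exact h
  have hb1 : 1 ≤ b := by omega
  have hk1 : k = (b + cc + 1) * a + 1 := by rw [← ha]; omega
  have h5' : k * n + m + 1 = 2 * (a * b + 1) * (b + cc + 1) := by
    rw [hk1, hb, hcc]; ring
  have h6' : n + m + 1 = 2 * (b + cc + 1) := by rw [hb, hcc]; ring
  have h7' : (a * b + 1 - 1) * (b + cc + 1) = (k - 1) * b := by
    rw [hk1, Nat.add_sub_cancel, Nat.add_sub_cancel]; ring
  have h8' : 2 ≤ a * b + 1 := by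
    have : a * b ≠ 0 := Nat.mul_ne_zero (by omega) (by omega)
    omega
  have hlow := not_isRamsey n m k (k * n + m + 1) (a * b + 1) (b + cc + 1) b
    (by omega) hb1 hnm hm h5' h6' h7' h8' hk
  have hbig := isRamsey_big n m k hnm (by omega)
  have hne2 : {N | IsRamsey (doubleStar n m) k N}.Nonempty := ⟨_, hbig⟩
  have hmem := Nat.sInf_mem hne2
  rw [ramseyNumber]
  by_contra hcon
  push_neg at hcon
  have hle : sInf {N | IsRamsey (doubleStar n m) k N} ≤ k * n + m + 1 := by omega
  exact hlow (ramsey_mono _ _ hle hmem)
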